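/- Let X be a Hausdorff space which admits a continuous weak selection and is totally disconnected at a point p ∈ X. If p is the limit of a sequence of points of X \ {p}, then p is a cut point of X. -/

import Mathlib

open Set Filter Topology

/-- The hyperspace of all nonempty closed subsets of `X`. -/
def HypF (X : Type*) [TopologicalSpace X] : Type _ :=
  {S : Set X // S.Nonempty ∧ IsClosed S}

variable {X : Type*} [TopologicalSpace X]

namespace HypF

/-- The Vietoris topology on `HypF X`, generated by the canonical basic sets
`⟨𝒱⟩ = {S | S ⊆ ⋃𝒱 ∧ ∀ V ∈ 𝒱, S ∩ V ≠ ∅}` where `𝒱` runs over the finite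
families of open subsets of `X`. -/
instance : TopologicalSpace (HypF X) :=
  TopologicalSpace.generateFrom
    {B : Set (HypF X) | ∃ 𝒱 : Finset (Set X), (∀ V ∈ 𝒱, IsOpen V) ∧
      B = {S : HypF X | S.1 ⊆ (⋃ V ∈ 𝒱, V) ∧ ∀ V ∈ 𝒱, (S.1 ∩ V).Nonempty}}

/-- The hyperspace is partially ordered by set-theoretic inclusion. -/
instance : PartialOrder (HypF X) :=
  PartialOrder.lift Subtype.val Subtype.coe_injective

/-- The whole space `X` as an element of its hyperspace. -/
def top (X : Type*) [TopologicalSpace X] [Nonempty X] : HypF X :=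
  ⟨univ, univ_nonempty, isClosed_univ⟩

/-- The union of two members of the hyperspace. -/
def union (T S : HypF X) : HypF X :=
  ⟨T.1 ∪ S.1, T.2.1.mono subset_union_left, T.2.2.union S.2.2⟩

end HypF

/-- A continuous selection for the Vietoris hyperspace `HypF X`. -/
def IsContinuousSelection (f : HypF X → X) : Prop :=
  Continuous f ∧ ∀ S : HypF X, f S ∈ S.1

/-- `p` is a cut point of `X`: `X \ {p} = U ∪ V` with `cl U ∩ cl V = {p}`. -/
def IsCutPoint (p : X) : Prop :=
  ∃ U V : Set X, ({p}ᶜ : Set X) = U ∪ V ∧ closure U ∩ closure V = {p}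

/-- `p` is a butterfly point of `X`. -/
def IsButterflyPoint (p : X) : Prop :=
  ∃ F G : Set X, IsClosed F ∧ IsClosed G ∧
    closure (F \ {p}) ∩ closure (G \ {p}) = {p}

/-- `X` is totally disconnected at `p`: `{p}` is an intersection of clopen sets. -/
def TotallyDisconnectedAt (p : X) : Prop :=
  ∃ 𝒞 : Set (Set X), (∀ C ∈ 𝒞, IsClopen C) ∧ ⋂₀ 𝒞 = {p}

/-- `y` has a countable base of clopen neighbourhoods in `Y`. -/
def HasCountableClopenBase {Y : Type*} [TopologicalSpace Y] (y : Y) : Prop :=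
  ∃ ℬ : Set (Set Y), ℬ.Countable ∧ (∀ B ∈ ℬ, IsClopen B ∧ y ∈ B) ∧
    ∀ W : Set Y, IsOpen W → y ∈ W → ∃ B ∈ ℬ, B ⊆ W

/-- `p` is countably-approachable: it is isolated, or it has a countable clopen
base in `cl U` for some open `U ⊆ X \ {p}` with `cl U = U ∪ {p}`. -/
def CountablyApproachable (p : X) : Prop :=
  IsOpen ({p} : Set X) ∨
    ∃ U : Set X, IsOpen U ∧ U ⊆ ({p}ᶜ : Set X) ∧ closure U = U ∪ {p} ∧
      ∀ hp : p ∈ closure U, HasCountableClopenBase (⟨p, hp⟩ : closure U)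

/-- `p` is selection maximal: some continuous selection `f` satisfies `f S = p`
whenever `p ∈ S`. -/
def SelectionMaximal (p : X) : Prop :=
  ∃ f : HypF X → X, IsContinuousSelection f ∧ ∀ S : HypF X, p ∈ S.1 → f S = p

/-- `ℬ` is a local base at `p`. -/
def IsLocalBaseAt (p : X) (ℬ : Set (Set X)) : Prop :=
  (∀ B ∈ ℬ, IsOpen B ∧ p ∈ B) ∧
    ∀ W : Set X, IsOpen W → p ∈ W → ∃ B ∈ ℬ, B ⊆ W

/-- `X_Θ`: the set of values `f(X)` of continuous selections for `HypF X`. -/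
def thetaSet (X : Type*) [TopologicalSpace X] [Nonempty X] : Set X :=
  {p | ∃ f : HypF X → X, IsContinuousSelection f ∧ f (HypF.top X) = p}

/-- `X_Ω`: the set of countably-approachable points of `X`. -/
def omegaSet (X : Type*) [TopologicalSpace X] : Set X :=
  {p | CountablyApproachable p}

/-- `X_Θ*`: the selection maximal points of `X_Θ`. -/
def thetaStarSet (X : Type*) [TopologicalSpace X] [Nonempty X] : Set X :=
  {p ∈ thetaSet X | SelectionMaximal p}

/-- `X_Ω*`: the points of `X_Ω` with a countable clopen base in `X`. -/
def omegaStarSet (X : Type*) [TopologicalSpace X] : Set X :=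
  {p ∈ omegaSet X | HasCountableClopenBase p}

/-- `F₂(X)`: the subsets of `X` with at least one and at most two points. -/
def HypF2 (X : Type*) : Type _ := {S : Set X // ∃ x y : X, S = {x, y}}

/-- The Vietoris topology on `HypF2 X`. -/
instance : TopologicalSpace (HypF2 X) :=
  TopologicalSpace.generateFrom
    {B : Set (HypF2 X) | ∃ 𝒱 : Finset (Set X), (∀ V ∈ 𝒱, IsOpen V) ∧
      B = {S : HypF2 X | S.1 ⊆ (⋃ V ∈ 𝒱, V) ∧ ∀ V ∈ 𝒱, (S.1 ∩ V).Nonempty}}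

/-- The unordered pair `{x, y}` as an element of `HypF2 X`. -/
def pairF {X : Type*} (x y : X) : HypF2 X := ⟨{x, y}, x, y, rfl⟩

/-- A weak selection for `X`. -/
def IsWeakSelection {X : Type*} (σ : HypF2 X → X) : Prop := ∀ S : HypF2 X, σ S ∈ S.1

/-- The strict relation `x <_σ y` generated by a weak selection `σ`. -/
def wsLT {X : Type*} (σ : HypF2 X → X) (x y : X) : Prop := σ (pairF x y) = x ∧ x ≠ y


section Statement11Aux

private lemma pairF_comm' (x y : X) : pairF x y = pairF y x :=
  Subtype.ext (Set.pair_comm x y)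

private lemma mem_pairF (σ : HypF2 X → X) (hσ : IsWeakSelection σ) (x y : X) :
    σ (pairF x y) = x ∨ σ (pairF x y) = y := by
  have h := hσ (pairF x y)
  simpa [pairF] using h

private lemma continuous_pairF_right (q : X) :
    Continuous (fun w : X => pairF q w) := by
  refine continuous_generateFrom_iff.mpr ?_
  rintro s ⟨𝒱, h𝒱, rfl⟩
  have hpre : (fun w : X => pairF q w) ⁻¹'
      {S : HypF2 X | S.1 ⊆ (⋃ V ∈ 𝒱, V) ∧ ∀ V ∈ 𝒱, (S.1 ∩ V).Nonempty}
      = {w : X | q ∈ (⋃ V ∈ 𝒱, V) ∧ w ∈ (⋃ V ∈ 𝒱, V)} ∩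
        ⋂ V ∈ 𝒱, {w : X | q ∈ V ∨ w ∈ V} := by
    ext w
    show ({q, w} : Set X) ⊆ (⋃ V ∈ 𝒱, V) ∧ (∀ V ∈ 𝒱, (({q, w} : Set X) ∩ V).Nonempty) ↔ _
    simp only [mem_preimage, mem_setOf_eq, mem_inter_iff, mem_iInter, pairF,
      insert_subset_iff, singleton_subset_iff]
    constructor
    · rintro ⟨⟨hq, hw⟩, h⟩
      refine ⟨⟨hq, hw⟩, fun V hV => ?_⟩
      obtain ⟨z, hz⟩ := h V hV
      rcases hz.1 with rfl | hz1
      · exact Or.inl hz.2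
      · rw [mem_singleton_iff] at hz1
        subst hz1
        exact Or.inr hz.2
    · rintro ⟨⟨hq, hw⟩, h⟩
      refine ⟨⟨hq, hw⟩, fun V hV => ?_⟩
      rcases h V hV with h' | h'
      · exact ⟨q, mem_insert _ _, h'⟩
      · exact ⟨w, mem_insert_iff.mpr (Or.inr rfl), h'⟩
  rw [hpre]
  by_cases hq : q ∈ ⋃ V ∈ 𝒱, V
  · refine IsOpen.inter ?_ (isOpen_biInter_finset fun V hV => ?_)
    · have h1 : {w : X | q ∈ (⋃ V ∈ 𝒱, V) ∧ w ∈ (⋃ V ∈ 𝒱, V)} = ⋃ V ∈ 𝒱, V := by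
        ext w; simp [hq]
      rw [h1]
      exact isOpen_biUnion h𝒱
    · by_cases hqV : q ∈ V
      · have h2 : {w : X | q ∈ V ∨ w ∈ V} = univ := by ext w; simp [hqV]
        rw [h2]; exact isOpen_univ
      · have h2 : {w : X | q ∈ V ∨ w ∈ V} = V := by ext w; simp [hqV]
        rw [h2]; exact h𝒱 V hV
  · have h1 : {w : X | q ∈ (⋃ V ∈ 𝒱, V) ∧ w ∈ (⋃ V ∈ 𝒱, V)} = ∅ := by
      ext w; simp [hq]
    rw [h1, empty_inter]
    exact isOpen_empty

private lemma sel_tendsto (σ : HypF2 X → X) (hσc : Continuous σ)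
    (q p : X) (y : ℕ → X) (hy : Tendsto y atTop (𝓝 p)) :
    Tendsto (fun j => σ (pairF q (y j))) atTop (𝓝 (σ (pairF q p))) :=
  ((hσc.comp (continuous_pairF_right q)).tendsto p).comp hy

private lemma sel_limit_left [T2Space X] (σ : HypF2 X → X) (hσc : Continuous σ)
    {q p : X} {y : ℕ → X} (hy : Tendsto y atTop (𝓝 p))
    (h : ∀ j, σ (pairF q (y j)) = y j) : σ (pairF q p) = p := by
  have h1 := sel_tendsto σ hσc q p y hy
  have h2 : Tendsto (fun j => σ (pairF q (y j))) atTop (𝓝 p) := by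
    simpa only [h] using hy
  exact tendsto_nhds_unique h1 h2

private lemma sel_limit_right [T2Space X] (σ : HypF2 X → X) (hσc : Continuous σ)
    {q p : X} {y : ℕ → X} (hy : Tendsto y atTop (𝓝 p))
    (h : ∀ j, σ (pairF q (y j)) = q) : σ (pairF q p) = q := by
  have h1 := sel_tendsto σ hσc q p y hy
  have h2 : Tendsto (fun j => σ (pairF q (y j))) atTop (𝓝 q) := by
    simpa only [h] using (tendsto_const_nhds : Tendsto (fun _ : ℕ => q) atTop (𝓝 q))
  exact tendsto_nhds_unique h1 h2

private lemma isOpen_wsG [T2Space X] (σ : HypF2 X → X) (hσ : IsWeakSelection σ)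
    (hσc : Continuous σ) (a : X) : IsOpen {z : X | wsLT σ a z} := by
  rw [isOpen_iff_forall_mem_open]
  rintro z ⟨hsel, hne⟩
  obtain ⟨A, B, hA, hB, haA, hzB, hAB⟩ := t2_separation hne
  refine ⟨B ∩ (fun w : X => σ (pairF a w)) ⁻¹' A, ?_,
    hB.inter ((hσc.comp (continuous_pairF_right a)).isOpen_preimage A hA), hzB, ?_⟩
  · rintro w ⟨hwB, hwA⟩
    rw [mem_preimage] at hwA
    rcases mem_pairF σ hσ a w with h | h
    · exact ⟨h, fun he => disjoint_left.mp hAB haA (by rw [he]; exact hwB)⟩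
    · exfalso
      rw [h] at hwA
      exact disjoint_left.mp hAB hwA hwB
  · show z ∈ _ ⁻¹' A
    rw [mem_preimage, hsel]
    exact haA

private lemma isOpen_wsL [T2Space X] (σ : HypF2 X → X) (hσ : IsWeakSelection σ)
    (hσc : Continuous σ) (a : X) : IsOpen {z : X | wsLT σ z a} := by
  rw [isOpen_iff_forall_mem_open]
  rintro z ⟨hsel, hne⟩
  obtain ⟨A, B, hA, hB, haA, hzB, hAB⟩ := t2_separation (fun h : a = z => hne h.symm)
  refine ⟨B ∩ (fun w : X => σ (pairF a w)) ⁻¹' B, ?_,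
    hB.inter ((hσc.comp (continuous_pairF_right a)).isOpen_preimage B hB), hzB, ?_⟩
  · rintro w ⟨hwB, hwA⟩
    rw [mem_preimage] at hwA
    rcases mem_pairF σ hσ a w with h | h
    · exfalso
      rw [h] at hwA
      exact disjoint_left.mp hAB haA hwA
    · refine ⟨?_, fun he => disjoint_left.mp hAB (by rw [he]; exact haA) hwB⟩
      rw [pairF_comm' w a]
      exact h
  · show z ∈ _ ⁻¹' B
    rw [mem_preimage, pairF_comm' a z, hsel]
    exact hzB

private lemma cl_lt_lemma (lt : X → X → Prop)
    (total : ∀ x y : X, x ≠ y → lt x y ∨ lt y x)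
    (antis : ∀ x y : X, lt x y → ¬ lt y x)
    (hLopen : ∀ a : X, IsOpen {z : X | lt z a})
    {a z : X} (hz : z ∈ closure {w : X | lt a w}) (hne : z ≠ a) : lt a z := by
  by_contra h
  rcases total z a hne with h' | h'
  · obtain ⟨w, hw1, hw2⟩ := mem_closure_iff.mp hz _ (hLopen a) h'
    exact antis a w hw2 hw1
  · exact h h'

private lemma cut_of_side (lt : X → X → Prop)
    (total : ∀ x y : X, x ≠ y → lt x y ∨ lt y x)
    (antis : ∀ x y : X, lt x y → ¬ lt y x)
    (hGopen : ∀ a : X, IsOpen {z : X | lt a z})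
    (hLopen : ∀ a : X, IsOpen {z : X | lt z a})
    (p : X) (htd : TotallyDisconnectedAt p)
    (x : ℕ → X) (hx : ∀ n, x n ≠ p) (hlim : Tendsto x atTop (𝓝 p))
    (hlimlt : ∀ q : X, q ≠ p → ∀ y : ℕ → X, Tendsto y atTop (𝓝 p) →
      (∀ j, lt (y j) q) → lt p q)
    (hO : p ∉ closure {z : X | lt p z}) :
    IsCutPoint p := by
  obtain ⟨𝒞, hclo, hint⟩ := htd
  set O : Set X := (closure {z : X | lt p z})ᶜ with hOdef
  have hOopen : IsOpen O := isClosed_closure.isOpen_compl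
  have hpO : p ∈ O := hO
  have hOlt : ∀ z : X, z ∈ O → z ≠ p → lt z p := by
    intro z hz hzp
    rcases total z p hzp with h | h
    · exact h
    · exact absurd (subset_closure (h : z ∈ {w : X | lt p w})) hz
  have hCex : ∀ z : X, z ≠ p → ∃ C, IsClopen C ∧ p ∈ C ∧ z ∉ C := by
    intro z hz
    have h1 : z ∉ ⋂₀ 𝒞 := by rw [hint]; simpa using hz
    rw [mem_sInter] at h1
    push_neg at h1
    obtain ⟨D, hD1, hD2⟩ := h1
    have hp : p ∈ ⋂₀ 𝒞 := by rw [hint]; rfl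
    exact ⟨D, hclo D hD1, mem_sInter.mp hp D hD1, hD2⟩
  have hstep : ∀ s : {s : ℕ × Set X // IsOpen s.2 ∧ p ∈ s.2 ∧ s.2 ⊆ O},
      ∃ t : {s : ℕ × Set X // IsOpen s.2 ∧ p ∈ s.2 ∧ s.2 ⊆ O},
        s.1.1 < t.1.1 ∧ x t.1.1 ∈ s.1.2 ∧
        ∃ C, IsClopen C ∧ p ∈ C ∧ x t.1.1 ∉ C ∧
          t.1.2 = s.1.2 ∩ ({z : X | lt (x t.1.1) z} ∩ C) := by
    rintro ⟨⟨n, S⟩, hSo, hpS, hSO⟩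
    obtain ⟨m, hm1, hm2⟩ :=
      ((hlim.eventually_mem (hSo.mem_nhds hpS)).and (eventually_gt_atTop n)).exists
    obtain ⟨C, hCc, hpC, hxC⟩ := hCex (x m) (hx m)
    exact ⟨⟨(m, S ∩ ({z : X | lt (x m) z} ∩ C)), hSo.inter ((hGopen _).inter hCc.isOpen),
      ⟨hpS, hOlt _ (hSO hm1) (hx m), hpC⟩, inter_subset_left.trans hSO⟩,
      hm2, hm1, C, hCc, hpC, hxC, rfl⟩
  choose step hlt1 hmem1 hstep1 using hstep
  choose Cf hCclo hCp hCx hSeq using hstep1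
  set s0 : {s : ℕ × Set X // IsOpen s.2 ∧ p ∈ s.2 ∧ s.2 ⊆ O} :=
    ⟨(0, O), hOopen, hpO, subset_rfl⟩ with hs0
  set g : ℕ → {s : ℕ × Set X // IsOpen s.2 ∧ p ∈ s.2 ∧ s.2 ⊆ O} :=
    fun k => step^[k] s0 with hgdef
  have hg : ∀ k, g (k + 1) = step (g k) := by
    intro k
    rw [hgdef]
    exact Function.iterate_succ_apply' step k s0
  set S : ℕ → Set X := fun k => (g k).1.2 with hSdef
  set y : ℕ → X := fun k => x (g (k + 1)).1.1 with hydef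
  set C : ℕ → Set X := fun k => Cf (g k) with hCdef
  have hS0 : S 0 = O := by
    simp only [hSdef, hgdef, Function.iterate_zero_apply, hs0]
  have hSopen : ∀ k, IsOpen (S k) := by
    intro k; rw [hSdef]; exact (g k).2.1
  have hpS : ∀ k, p ∈ S k := by
    intro k; rw [hSdef]; exact (g k).2.2.1
  have hSO : ∀ k, S k ⊆ O := by
    intro k; rw [hSdef]; exact (g k).2.2.2
  have hSsucc : ∀ k, S (k + 1) = S k ∩ ({z : X | lt (y k) z} ∩ C k) := by
    intro k
    simp only [hSdef, hydef, hCdef, hg k]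
    exact hSeq (g k)
  have hyS : ∀ k, y k ∈ S k := by
    intro k
    simp only [hSdef, hydef, hg k]
    exact hmem1 (g k)
  have hynep : ∀ k, y k ≠ p := by
    intro k; rw [hydef]; exact hx _
  have hCfactsClo : ∀ k, IsClopen (C k) := by
    intro k; rw [hCdef]; exact hCclo (g k)
  have hyC : ∀ k, y k ∉ C k := by
    intro k
    simp only [hydef, hCdef, hg k]
    exact hCx (g k)
  have hymono : StrictMono (fun k => (g (k + 1)).1.1) := by
    refine strictMono_nat_of_lt_succ fun k => ?_
    rw [hg (k + 1)]
    exact hlt1 (g (k + 1))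
  have hytend : Tendsto y atTop (𝓝 p) := by
    rw [hydef]
    exact hlim.comp hymono.tendsto_atTop
  have hSanti : ∀ k, S (k + 1) ⊆ S k := by
    intro k; rw [hSsucc k]; exact inter_subset_left
  have hAnti : Antitone S := antitone_nat_of_succ_le hSanti
  have hSsubG : ∀ k, S (k + 1) ⊆ {z : X | lt (y k) z} := by
    intro k; rw [hSsucc k]; exact inter_subset_right.trans inter_subset_left
  have hSsubC : ∀ k, S (k + 1) ⊆ C k := by
    intro k; rw [hSsucc k]; exact inter_subset_right.trans inter_subset_right
  have hclS : ∀ k, closure (S k) ∩ O ⊆ S k := by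
    intro k
    induction k with
    | zero =>
      rw [hS0]
      exact fun z hz => hz.2
    | succ k ih =>
      rintro z ⟨hzc, hzO⟩
      have h1 : z ∈ closure (S k) := closure_mono (hSanti k) hzc
      have h2 : z ∈ C k := closure_minimal (hSsubC k) (hCfactsClo k).isClosed hzc
      have h3 : z ∈ closure {w : X | lt (y k) w} := closure_mono (hSsubG k) hzc
      have hzy : z ≠ y k := fun h => hyC k (h ▸ h2)
      have h4 : lt (y k) z := cl_lt_lemma lt total antis hLopen h3 hzy
      rw [hSsucc k]
      exact ⟨ih ⟨h1, hzO⟩, h4, h2⟩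
  have hynotcl : ∀ k, y k ∉ closure (S (k + 1)) := by
    intro k h
    exact hyC k (closure_minimal (hSsubC k) (hCfactsClo k).isClosed h)
  set R : ℕ → Set X := fun k => S k \ closure (S (k + 1)) with hRdef
  have hRopen : ∀ k, IsOpen (R k) := by
    intro k
    simp only [hRdef]
    exact (hSopen k).sdiff isClosed_closure
  have hRS : ∀ i, R i ⊆ S i := by
    intro i
    simp only [hRdef]
    exact diff_subset
  have hyR : ∀ k, y k ∈ R k := by
    intro k
    simp only [hRdef]
    exact ⟨hyS k, hynotcl k⟩
  have hpnotR : ∀ k, p ∉ R k := by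
    intro k h
    simp only [hRdef] at h
    exact h.2 (subset_closure (hpS (k + 1)))
  have hRdisj : ∀ {j k : ℕ}, j < k → ∀ z, z ∈ R j → z ∉ R k := by
    intro j k hjk z hzj hzk
    simp only [hRdef] at hzj hzk
    exact hzj.2 (subset_closure (hAnti (Nat.succ_le_of_lt hjk) hzk.1))
  set Vp : Set X := ⋃ k : ℕ, R (2 * k) with hVdef
  set Up : Set X := ({p}ᶜ : Set X) \ Vp with hUdef
  have hVsub : Vp ⊆ ({p}ᶜ : Set X) := by
    rw [hVdef]
    refine iUnion_subset fun k z hz hzp => ?_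
    rw [mem_singleton_iff] at hzp
    subst hzp
    exact hpnotR _ hz
  have hUV : ({p}ᶜ : Set X) = Up ∪ Vp := by
    rw [hUdef]
    exact (diff_union_of_subset hVsub).symm
  have hUVdisj : ∀ z, z ∈ Up → z ∉ Vp := by
    intro z hz
    rw [hUdef] at hz
    exact hz.2
  have hVL : Vp ⊆ {z : X | lt z p} := by
    rw [hVdef]
    refine iUnion_subset fun k z hz => ?_
    simp only [hRdef] at hz
    have hzO : z ∈ O := hSO (2 * k) hz.1
    have hzp : z ≠ p := fun h => (h ▸ hz.2) (subset_closure (hpS _))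
    exact hOlt z hzO hzp
  have hVmem : p ∈ closure Vp := by
    have hsm : StrictMono (fun k : ℕ => 2 * k) := strictMono_nat_of_lt_succ fun n => by omega
    have h1 : Tendsto (fun k => y (2 * k)) atTop (𝓝 p) := hytend.comp hsm.tendsto_atTop
    refine mem_closure_of_tendsto h1 (Eventually.of_forall fun k => ?_)
    rw [hVdef]
    exact mem_iUnion.mpr ⟨k, hyR (2 * k)⟩
  have hUmem : p ∈ closure Up := by
    have hsm : StrictMono (fun k : ℕ => 2 * k + 1) := strictMono_nat_of_lt_succ fun n => by omega
    have h1 : Tendsto (fun k => y (2 * k + 1)) atTop (𝓝 p) := hytend.comp hsm.tendsto_atTop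
    refine mem_closure_of_tendsto h1 (Eventually.of_forall fun k => ?_)
    rw [hUdef]
    refine ⟨by simpa using hynep (2 * k + 1), ?_⟩
    rw [hVdef]
    simp only [mem_iUnion, not_exists]
    intro k' hk'
    rcases lt_trichotomy (2 * k') (2 * k + 1) with h | h | h
    · exact hRdisj h _ hk' (hyR (2 * k + 1))
    · omega
    · exact hRdisj h _ (hyR (2 * k + 1)) hk'
  refine ⟨Up, Vp, hUV, Subset.antisymm ?_ (singleton_subset_iff.mpr ⟨hUmem, hVmem⟩)⟩
  rintro q ⟨hqU, hqV⟩
  rw [mem_singleton_iff]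
  by_contra hqp
  by_cases hqO : q ∈ O
  · by_cases hA : ∀ l, q ∈ closure (Vp ∩ S l)
    · have hqS : ∀ l, q ∈ S l := fun l =>
        hclS l ⟨closure_mono inter_subset_right (hA l), hqO⟩
      have hql : ∀ k, lt (y k) q := fun k => hSsubG k (hqS (k + 1))
      have hpq : lt p q := hlimlt q hqp y hytend hql
      exact hqO (subset_closure hpq)
    · push_neg at hA
      obtain ⟨l, hl⟩ := hA
      have hsplit : q ∈ closure (Vp \ S l) := by
        have hVeq : Vp = (Vp ∩ S l) ∪ (Vp \ S l) := (inter_union_diff Vp (S l)).symm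
        rw [hVeq, closure_union] at hqV
        exact hqV.resolve_left hl
      have hsub : Vp \ S l ⊆ ⋃ k ∈ Finset.range l, R (2 * k) := by
        rintro z ⟨hz1, hz2⟩
        rw [hVdef] at hz1
        rw [mem_iUnion] at hz1
        obtain ⟨k, hk⟩ := hz1
        have hkS : z ∈ S (2 * k) := hRS (2 * k) hk
        have h2k : 2 * k < l := by
          by_contra h
          push_neg at h
          exact hz2 (hAnti h hkS)
        exact mem_iUnion₂.mpr ⟨k, Finset.mem_range.mpr (by omega), hk⟩
      have hclq : q ∈ ⋃ k ∈ Finset.range l, closure (R (2 * k)) := by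
        have h1 := closure_mono hsub hsplit
        rwa [Finset.closure_biUnion] at h1
      simp only [mem_iUnion, exists_prop] at hclq
      obtain ⟨k, hkl, hqR⟩ := hclq
      have hqSj : q ∈ S (2 * k) := hclS (2 * k) ⟨closure_mono (hRS (2 * k)) hqR, hqO⟩
      have hqnotSj1 : q ∉ closure (S (2 * k + 1)) := by
        intro h
        have hqj1 : q ∈ S (2 * k + 1) := hclS (2 * k + 1) ⟨h, hqO⟩
        obtain ⟨w, hw1, hw2⟩ := mem_closure_iff.mp hqR _ (hSopen (2 * k + 1)) hqj1
        simp only [hRdef] at hw2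
        exact hw2.2 (subset_closure hw1)
      have hqRj : q ∈ R (2 * k) := by
        simp only [hRdef]
        exact ⟨hqSj, hqnotSj1⟩
      obtain ⟨w, hw1, hw2⟩ := mem_closure_iff.mp hqU _ (hRopen (2 * k)) hqRj
      refine hUVdisj w hw2 ?_
      rw [hVdef]
      exact mem_iUnion.mpr ⟨k, hw1⟩
  · rw [hOdef, mem_compl_iff, not_not] at hqO
    have hq2 : q ∈ closure {z : X | lt z p} := closure_mono hVL hqV
    have h1 : lt p q := cl_lt_lemma lt total antis hLopen hqO hqp
    have h2 : lt q p := cl_lt_lemma (fun a b => lt b a)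
      (fun a b h => Or.symm (total a b h)) (fun a b h h' => antis b a h h')
      (fun a => hGopen a) hq2 hqp
    exact antis p q h1 h2

end Statement11Aux

/-- If `X` has a continuous weak selection, is totally
disconnected at `p`, and `p` is the limit of a sequence of points of
`X \ {p}`, then `p` is a cut point of `X`. -/
theorem statement11 (X : Type*) [TopologicalSpace X] [T2Space X]
    (σ : HypF2 X → X) (hσ : IsWeakSelection σ) (hσc : Continuous σ)
    (p : X) (htd : TotallyDisconnectedAt p)
    (x : ℕ → X) (hx : ∀ n, x n ∈ ({p}ᶜ : Set X)) (hlim : Tendsto x atTop (𝓝 p)) :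
    IsCutPoint p := by
  have hxne : ∀ n, x n ≠ p := fun n => by simpa using hx n
  have wsTotal : ∀ a b : X, a ≠ b → wsLT σ a b ∨ wsLT σ b a := by
    intro a b hab
    rcases mem_pairF σ hσ a b with h | h
    · exact Or.inl ⟨h, hab⟩
    · refine Or.inr ⟨?_, hab.symm⟩
      rw [pairF_comm' b a]
      exact h
  have wsAntis : ∀ a b : X, wsLT σ a b → ¬ wsLT σ b a := by
    rintro a b ⟨h1, hne⟩ ⟨h2, _⟩
    rw [pairF_comm' b a] at h2
    exact hne (h1.symm.trans h2)
  have wsGopen := isOpen_wsG σ hσ hσc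
  have wsLopen := isOpen_wsL σ hσ hσc
  have hlimlt1 : ∀ q : X, q ≠ p → ∀ y : ℕ → X, Tendsto y atTop (𝓝 p) →
      (∀ j, wsLT σ (y j) q) → wsLT σ p q := by
    intro q hq y hy h
    have h' : ∀ j, σ (pairF q (y j)) = y j := by
      intro j
      rw [pairF_comm' q (y j)]
      exact (h j).1
    have hs := sel_limit_left σ hσc hy h'
    refine ⟨?_, hq.symm⟩
    rw [pairF_comm' p q]
    exact hs
  have hlimlt2 : ∀ q : X, q ≠ p → ∀ y : ℕ → X, Tendsto y atTop (𝓝 p) →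
      (∀ j, wsLT σ q (y j)) → wsLT σ q p := by
    intro q hq y hy h
    exact ⟨sel_limit_right σ hσc hy (fun j => (h j).1), hq⟩
  by_cases h1 : p ∈ closure {z : X | wsLT σ p z}
  · by_cases h2 : p ∈ closure {z : X | wsLT σ z p}
    · refine ⟨{z : X | wsLT σ z p}, {z : X | wsLT σ p z}, ?_, ?_⟩
      · ext z
        simp only [mem_compl_iff, mem_singleton_iff, mem_union, mem_setOf_eq]
        constructor
        · intro hz
          exact wsTotal z p hz
        · rintro (⟨_, hz⟩ | ⟨_, hz⟩)
          · exact hz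
          · exact hz.symm
      · refine Subset.antisymm ?_ (singleton_subset_iff.mpr ⟨h2, h1⟩)
        rintro q ⟨hqL, hqG⟩
        rw [mem_singleton_iff]
        by_contra hqp
        have hA : wsLT σ p q := cl_lt_lemma (wsLT σ) wsTotal wsAntis wsLopen hqG hqp
        have hB : wsLT σ q p := cl_lt_lemma (fun a b => wsLT σ b a)
          (fun a b h => Or.symm (wsTotal a b h)) (fun a b h h' => wsAntis b a h h')
          (fun a => wsGopen a) hqL hqp
        exact wsAntis p q hA hB
    · exact cut_of_side (fun a b => wsLT σ b a)
        (fun a b h => Or.symm (wsTotal a b h)) (fun a b h h' => wsAntis b a h h')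
        (fun a => wsLopen a) (fun a => wsGopen a) p htd x hxne hlim
        (fun q hq y hy h => hlimlt2 q hq y hy h) h2
  · exact cut_of_side (wsLT σ) wsTotal wsAntis wsGopen wsLopen p htd x hxne hlim
      hlimlt1 h1
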